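/- Let C be a right Markov code for (X_A, σ_A), where A is an irreducible non-permutation {0,1}-matrix. Then the one-sided topological Markov shifts (X_{A(C)}, σ_{A(C)}) and (X_A, σ_A) are continuously orbit equivalent. -/

import Mathlib

namespace TMS

/-- A `{0,1}` transition matrix on `N` symbols, as a `Bool`-valued function. -/
abbrev Mat (N : ℕ) := Fin N → Fin N → Bool

/-- A finite word is (locally) admissible: all consecutive transitions are allowed. -/
def Adm {N : ℕ} (A : Mat N) (w : List (Fin N)) : Prop :=
  List.Chain' (fun a b => A a b = true) w

instance {N : ℕ} (A : Mat N) (w : List (Fin N)) : Decidable (Adm A w) :=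
  inferInstanceAs (Decidable (List.IsChain (fun a b => A a b = true) w))

/-- The one-sided shift space `X_A`. -/
def SSpace {N : ℕ} (A : Mat N) : Set (ℕ → Fin N) :=
  {x | ∀ n, A (x n) (x (n + 1)) = true}

/-- The shift on sequences. -/
def shift {N : ℕ} (x : ℕ → Fin N) : ℕ → Fin N := fun n => x (n + 1)

/-- The shift as a self-map of the shift space. -/
def shiftS {N : ℕ} (A : Mat N) (x : ↥(SSpace A)) : ↥(SSpace A) :=
  ⟨shift x.1, fun n => x.2 (n + 1)⟩

/-- `x` begins with the finite word `w`. -/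
def Begins {N : ℕ} (x : ℕ → Fin N) (w : List (Fin N)) : Prop :=
  ∀ i (h : i < w.length), x i = w.get ⟨i, h⟩

/-- A word belongs to `B_*(X_A)`: it occurs at the beginning of some point of `X_A`. -/
def AdmX {N : ℕ} (A : Mat N) (w : List (Fin N)) : Prop :=
  ∃ x ∈ SSpace A, Begins x w

/-- The cylinder set `U_w ⊂ X_A`. -/
def Cyl {N : ℕ} (A : Mat N) (w : List (Fin N)) : Set (ℕ → Fin N) :=
  {x ∈ SSpace A | Begins x w}

/-- A finite family of words is a prefix code: the words are pairwise distinct and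
no word is an initial segment of another. -/
def IsPrefixCode {N M : ℕ} (ω : Fin M → List (Fin N)) : Prop :=
  Function.Injective ω ∧ ∀ i j : Fin M, i ≠ j → ¬ (ω i <+: ω j)

/-- Starting position of the `n`-th block in the factorization of a point along
the index sequence `f`. -/
def pos {N M : ℕ} (ω : Fin M → List (Fin N)) (f : ℕ → Fin M) : ℕ → ℕ
  | 0 => 0
  | n + 1 => pos ω f n + (ω (f n)).length

/-- The point `x` factors as the infinite concatenation `ω (f 0) ω (f 1) ⋯`. -/
def Factors {N M : ℕ} (ω : Fin M → List (Fin N)) (x : ℕ → Fin N) (f : ℕ → Fin M) : Prop :=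
  ∀ n, Begins (fun k => x (pos ω f n + k)) (ω (f n))

/-- Matrix irreducibility: from any symbol there is an admissible path to any other. -/
def IrreducibleMat {N : ℕ} (A : Mat N) : Prop :=
  ∀ i j : Fin N, ∃ w : List (Fin N), Adm A (i :: (w ++ [j]))

/-- Permutation matrix: every row and every column has exactly one nonzero entry. -/
def IsPermMat {N : ℕ} (A : Mat N) : Prop :=
  (∀ i, ∃! j, A i j = true) ∧ (∀ j, ∃! i, A i j = true)

/-- A right Markov code for `(X_A, σ_A)`: a prefix code of nonempty admissible words
with the unique factorization property, shift invariance, and irreducibility. -/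
structure IsRightMarkovCode {N M : ℕ} (A : Mat N) (ω : Fin M → List (Fin N)) : Prop where
  adm : ∀ i, AdmX A (ω i)
  ne : ∀ i, ω i ≠ []
  prefixCode : IsPrefixCode ω
  uniqueFact : ∀ γ, AdmX A γ → ∃ η, AdmX A (γ ++ η) ∧
      ∃! l : List (Fin M), γ ++ η = (l.map ω).flatten
  shiftInv : ∃ L : ℕ, 0 < L ∧ ∀ l : List (Fin M), l.length = L → AdmX A ((l.map ω).flatten) →
      ∃ l' : List (Fin M), ((l.map ω).flatten).tail = (l'.map ω).flatten
  irr : ∀ i j, ∃ l : List (Fin M), AdmX A (ω i ++ (l.map ω).flatten ++ ω j)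

/-- The induced matrix `A(C)`: `A(C)(i,j) = 1` iff `ω i ω j` is admissible. -/
def matC {N M : ℕ} (A : Mat N) (ω : Fin M → List (Fin N)) : Mat M :=
  fun i j => decide (Adm A (ω i ++ ω j))

/-- Continuous orbit equivalence of one-sided topological Markov shifts. -/
def COE {N N' : ℕ} (A : Mat N) (B : Mat N') : Prop :=
  ∃ h : ↥(SSpace A) ≃ₜ ↥(SSpace B),
    (∃ k₁ l₁ : ↥(SSpace A) → ℕ, Continuous k₁ ∧ Continuous l₁ ∧
      ∀ x, (shiftS B)^[k₁ x] (h (shiftS A x)) = (shiftS B)^[l₁ x] (h x)) ∧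
    (∃ k₂ l₂ : ↥(SSpace B) → ℕ, Continuous k₂ ∧ Continuous l₂ ∧
      ∀ y, (shiftS A)^[k₂ y] (h.symm (shiftS B y)) = (shiftS A)^[l₂ y] (h.symm y))

variable {N M : ℕ}

def shiftn (x : ℕ → Fin N) (k : ℕ) : ℕ → Fin N := fun n => x (n + k)

lemma shiftn_mem {A : Mat N} {x : ℕ → Fin N} (hx : x ∈ SSpace A) (k : ℕ) :
    shiftn x k ∈ SSpace A := by
  intro n
  show A (x (n + k)) (x (n + 1 + k)) = true
  have e : n + 1 + k = n + k + 1 := by omega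
  rw [e]; exact hx (n + k)

lemma pos_zero (ω : Fin M → List (Fin N)) (f : ℕ → Fin M) : pos ω f 0 = 0 := rfl

lemma pos_succ (ω : Fin M → List (Fin N)) (f : ℕ → Fin M) (n : ℕ) :
    pos ω f (n + 1) = pos ω f n + (ω (f n)).length := rfl

lemma le_pos {ω : Fin M → List (Fin N)} (hne : ∀ i, ω i ≠ []) (f : ℕ → Fin M) (n : ℕ) :
    n ≤ pos ω f n := by
  induction n with
  | zero => simp [pos_zero]
  | succ n ih =>
    have := List.length_pos_iff.mpr (hne (f n))
    rw [pos_succ]; omega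

lemma pos_mono (ω : Fin M → List (Fin N)) (f : ℕ → Fin M) {m n : ℕ} (h : m ≤ n) :
    pos ω f m ≤ pos ω f n := by
  induction n, h using Nat.le_induction with
  | base => exact le_refl _
  | succ n hmn ih => rw [pos_succ]; omega

lemma pos_shift (ω : Fin M → List (Fin N)) (f : ℕ → Fin M) (n : ℕ) :
    pos ω (fun k => f (k + 1)) n + (ω (f 0)).length = pos ω f (n + 1) := by
  induction n with
  | zero => simp [pos_zero, pos_succ]
  | succ n ih =>
    rw [pos_succ, pos_succ]
    omega

lemma pos_congr {ω : Fin M → List (Fin N)} {f g : ℕ → Fin M} {n : ℕ}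
    (h : ∀ k < n, f k = g k) : pos ω f n = pos ω g n := by
  induction n with
  | zero => rfl
  | succ n ih =>
    rw [pos_succ, pos_succ, ih (fun k hk => h k (by omega)), h n (by omega)]

lemma begins_append {x : ℕ → Fin N} {u v : List (Fin N)} :
    Begins x (u ++ v) ↔ Begins x u ∧ Begins (fun k => x (u.length + k)) v := by
  constructor
  · intro h
    refine ⟨fun i hi => ?_, fun i hi => ?_⟩
    · have := h i (by rw [List.length_append]; omega)
      rw [this]
      simp only [List.get_eq_getElem]
      exact List.getElem_append_left hi
    · show x (u.length + i) = v.get ⟨i, hi⟩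
      have := h (u.length + i) (by rw [List.length_append]; omega)
      rw [this]
      simp only [List.get_eq_getElem]
      rw [List.getElem_append_right (by omega)]
      congr 1; omega
  · rintro ⟨h1, h2⟩ i hi
    rw [List.length_append] at hi
    rcases lt_or_ge i u.length with h | h
    · rw [h1 i h]
      simp only [List.get_eq_getElem]
      exact (List.getElem_append_left h).symm
    · have := h2 (i - u.length) (by omega)
      simp only [List.get_eq_getElem] at this ⊢
      rw [List.getElem_append_right (by omega)]
      show x i = v[i - u.length]
      rw [← this]
      congr 1; omega

lemma begins_of_prefix {x : ℕ → Fin N} {u v : List (Fin N)} (h : Begins x v) (hp : u <+: v) :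
    Begins x u := by
  obtain ⟨t, rfl⟩ := hp
  exact (begins_append.mp h).1

lemma prefix_of_begins {x : ℕ → Fin N} {u v : List (Fin N)} (hu : Begins x u) (hv : Begins x v)
    (h : u.length ≤ v.length) : u <+: v := by
  rw [List.prefix_iff_eq_take]
  apply List.ext_get
  · rw [List.length_take]; omega
  · intro i h1 h2
    have h3 := hu i h1
    have h4 := hv i (by omega)
    simp only [List.get_eq_getElem] at h3 h4
    simp only [List.get_eq_getElem, List.getElem_take]
    rw [← h3, ← h4]

lemma factors_shift {ω : Fin M → List (Fin N)} {x : ℕ → Fin N} {f : ℕ → Fin M}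
    (h : Factors ω x f) :
    Factors ω (shiftn x (ω (f 0)).length) (fun k => f (k + 1)) := by
  intro n i hi
  show x (pos ω (fun k => f (k + 1)) n + i + (ω (f 0)).length) = _
  have hp := pos_shift ω f n
  have e : pos ω (fun k => f (k + 1)) n + i + (ω (f 0)).length = pos ω f (n + 1) + i := by omega
  rw [e]
  exact h (n + 1) i hi

lemma factors_head_begins {ω : Fin M → List (Fin N)} {x : ℕ → Fin N} {f : ℕ → Fin M}
    (h : Factors ω x f) : Begins x (ω (f 0)) := by
  intro i hi
  have := h 0 i hi
  simpa [pos_zero] using this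

/-- heads of any two factorizations agree -/
lemma factors_head_eq {ω : Fin M → List (Fin N)} (hpc : IsPrefixCode ω)
    {x : ℕ → Fin N} {f g : ℕ → Fin M} (hf : Factors ω x f) (hg : Factors ω x g) :
    f 0 = g 0 := by
  by_contra hne
  have h1 := factors_head_begins hf
  have h2 := factors_head_begins hg
  rcases le_total (ω (f 0)).length (ω (g 0)).length with h | h
  · exact hpc.2 _ _ hne (prefix_of_begins h1 h2 h)
  · exact hpc.2 _ _ (fun e => hne e.symm) (prefix_of_begins h2 h1 h)

lemma factors_unique {ω : Fin M → List (Fin N)} (hpc : IsPrefixCode ω)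
    {x : ℕ → Fin N} {f g : ℕ → Fin M} (hf : Factors ω x f) (hg : Factors ω x g) :
    f = g := by
  funext n
  induction n generalizing x f g with
  | zero => exact factors_head_eq hpc hf hg
  | succ n ih =>
    have h0 : f 0 = g 0 := factors_head_eq hpc hf hg
    have hf' := factors_shift hf
    have hg' := factors_shift hg
    rw [h0] at hf'
    exact ih hf' hg'

/-- extract transitions from a Begins at an offset -/
lemma adm_of_begins_at {A : Mat N} {x : ℕ → Fin N} (hx : x ∈ SSpace A)
    {w : List (Fin N)} {p : ℕ} (hb : Begins (fun k => x (p + k)) w) : Adm A w := by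
  rw [Adm, List.Chain', List.isChain_iff_getElem]
  intro i h
  have e1 := hb i (by omega)
  have e2 := hb (i + 1) (by omega)
  simp only [List.get_eq_getElem] at e1 e2
  rw [← e1, ← e2]
  have e : p + (i + 1) = p + i + 1 := by omega
  rw [e]
  exact hx (p + i)

/-- a two-block window of a factorization -/
lemma factors_two_block {ω : Fin M → List (Fin N)} {x : ℕ → Fin N} {f : ℕ → Fin M}
    (h : Factors ω x f) (n : ℕ) :
    Begins (fun k => x (pos ω f n + k)) (ω (f n) ++ ω (f (n + 1))) := by
  rw [begins_append]
  refine ⟨h n, ?_⟩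
  intro i hi
  show x (pos ω f n + ((ω (f n)).length + i)) = _
  have e : pos ω f n + ((ω (f n)).length + i) = pos ω f (n + 1) + i := by rw [pos_succ]; omega
  rw [e]
  exact h (n + 1) i hi

lemma factors_matC {A : Mat N} {ω : Fin M → List (Fin N)} {x : ℕ → Fin N} {f : ℕ → Fin M}
    (hx : x ∈ SSpace A) (h : Factors ω x f) (n : ℕ) :
    matC A ω (f n) (f (n + 1)) = true := by
  rw [matC, decide_eq_true_iff]
  exact adm_of_begins_at hx (factors_two_block h n)

/-- a factorization begins with the flatten of its first blocks -/
lemma factors_begins_flatten {ω : Fin M → List (Fin N)} {x : ℕ → Fin N} {f : ℕ → Fin M}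
    (h : Factors ω x f) (m : ℕ) :
    Begins x ((((List.range m).map f).map ω).flatten) := by
  induction m generalizing x f with
  | zero => intro i hi; simp at hi
  | succ m ih =>
    have h1 : Begins (shiftn x (ω (f 0)).length)
        ((((List.range m).map (fun k => f (k + 1))).map ω).flatten) :=
      ih (factors_shift h)
    have h2 : Begins x (ω (f 0) ++ (((List.range m).map (fun k => f (k + 1))).map ω).flatten) := by
      rw [begins_append]
      refine ⟨factors_head_begins h, ?_⟩
      intro i hi
      show x ((ω (f 0)).length + i) = _
      have e2 : (ω (f 0)).length + i = i + (ω (f 0)).length := by omega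
      rw [e2]
      exact h1 i hi
    have e : (((List.range (m + 1)).map f).map ω).flatten
        = ω (f 0) ++ (((List.range m).map (fun k => f (k + 1))).map ω).flatten := by
      rw [List.range_succ_eq_map]
      simp only [List.map_cons, List.map_map, List.flatten_cons]
      congr 2
    rw [e]; exact h2

/-- blocks of a point beginning with a flatten -/
lemma begins_flatten_block {ω : Fin M → List (Fin N)} {x : ℕ → Fin N} {g : ℕ → Fin M} :
    ∀ (lst : List (Fin M)), Begins x ((lst.map ω).flatten) →
    (∀ i (h : i < lst.length), g i = lst.get ⟨i, h⟩) →
    ∀ n, n < lst.length → Begins (fun k => x (pos ω g n + k)) (ω (g n)) := by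
  intro lst
  induction lst generalizing x g with
  | nil => intro _ _ n hn; simp at hn
  | cons a t ih =>
    intro hb hg n hn
    simp only [List.map_cons, List.flatten_cons] at hb
    rw [begins_append] at hb
    obtain ⟨hb1, hb2⟩ := hb
    have hg0 : g 0 = a := hg 0 (by simp)
    cases n with
    | zero =>
      rw [hg0]
      intro i hi
      show x (pos ω g 0 + i) = _
      rw [pos_zero, Nat.zero_add]
      exact hb1 i hi
    | succ n =>
      have hgt : ∀ i (h : i < t.length), g (i + 1) = t.get ⟨i, h⟩ := by
        intro i h
        have := hg (i + 1) (by simp; omega)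
        simpa using this
      have hlt : n < t.length := by simp at hn; omega
      have := ih (x := fun k => x ((ω a).length + k)) (g := fun k => g (k + 1)) hb2 hgt n hlt
      intro i hi
      have h2 := this i hi
      show x (pos ω g (n + 1) + i) = _
      simp only at h2
      rw [← h2]
      have hp := pos_shift ω g n
      rw [hg0] at hp
      congr 1
      omega

/-- length of flatten of first blocks equals pos -/
lemma pos_eq_flatten_length {ω : Fin M → List (Fin N)} {g : ℕ → Fin M} :
    ∀ (lst : List (Fin M)), (∀ i (h : i < lst.length), g i = lst.get ⟨i, h⟩) →
    pos ω g lst.length = ((lst.map ω).flatten).length := by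
  intro lst
  induction lst generalizing g with
  | nil => intro _; rfl
  | cons a t ih =>
    intro hg
    have hg0 : g 0 = a := hg 0 (by simp)
    have hgt : ∀ i (h : i < t.length), g (i + 1) = t.get ⟨i, h⟩ := by
      intro i h
      have := hg (i + 1) (by simp; omega)
      simpa using this
    have h1 := ih (g := fun k => g (k + 1)) hgt
    have hp := pos_shift ω g t.length
    rw [hg0] at hp
    simp only [List.length_cons, List.map_cons, List.flatten_cons, List.length_append]
    omega

/-- transition extraction inside a window -/
lemma trans_of_begins {A : Mat N} {x : ℕ → Fin N} {w : List (Fin N)} {p j : ℕ}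
    (hb : Begins (fun k => x (p + k)) w) (hadm : Adm A w)
    (h1 : p ≤ j) (h2 : j + 1 < p + w.length) : A (x j) (x (j + 1)) = true := by
  rw [Adm, List.Chain', List.isChain_iff_getElem] at hadm
  have e1 := hb (j - p) (by omega)
  have e2 := hb (j - p + 1) (by omega)
  simp only [List.get_eq_getElem] at e1 e2
  have a1 : p + (j - p) = j := by omega
  have a2 : p + (j - p + 1) = j + 1 := by omega
  rw [a1] at e1; rw [a2] at e2
  rw [e1, e2]
  exact hadm (j - p) (by omega)

/-- the maximal code word length -/
def Lmax (ω : Fin M → List (Fin N)) : ℕ := Finset.univ.sup fun i => (ω i).length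

lemma length_le_Lmax (ω : Fin M → List (Fin N)) (i : Fin M) : (ω i).length ≤ Lmax ω :=
  Finset.le_sup (f := fun i => (ω i).length) (Finset.mem_univ i)

lemma exists_code_prefix {A : Mat N} {ω : Fin M → List (Fin N)}
    (huf : ∀ γ, AdmX A γ → ∃ η, AdmX A (γ ++ η) ∧
      ∃! l : List (Fin M), γ ++ η = (l.map ω).flatten)
    {x : ℕ → Fin N} (hx : x ∈ SSpace A) : ∃ i, Begins x (ω i) := by
  set γ : List (Fin N) := List.ofFn (fun j : Fin (Lmax ω + 1) => x j) with hγ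
  have hlen : γ.length = Lmax ω + 1 := by simp [hγ]
  have hbeg : Begins x γ := by
    intro i hi
    rw [hlen] at hi
    simp only [hγ, List.get_eq_getElem, List.getElem_ofFn]
  obtain ⟨η, hadm, l, hl, -⟩ := huf γ ⟨x, hx, hbeg⟩
  match l, hl with
  | [], hl => 
    exfalso
    have := congrArg List.length hl
    simp [hlen] at this
  | a :: t, hl =>
    refine ⟨a, ?_⟩
    have hp1 : ω a <+: γ ++ η := by
      refine ⟨(t.map ω).flatten, ?_⟩
      rw [hl]; simp
    have hp2 : γ <+: γ ++ η := List.prefix_append γ η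
    have hp3 : ω a <+: γ :=
      List.prefix_of_prefix_length_le hp1 hp2 (by rw [hlen]; have := length_le_Lmax ω a; omega)
    exact begins_of_prefix hbeg hp3

lemma code_prefix_unique {ω : Fin M → List (Fin N)} (hpc : IsPrefixCode ω)
    {x : ℕ → Fin N} {i j : Fin M} (hi : Begins x (ω i)) (hj : Begins x (ω j)) : i = j := by
  by_contra hne
  rcases le_total (ω i).length (ω j).length with h | h
  · exact hpc.2 _ _ hne (prefix_of_begins hi hj h)
  · exact hpc.2 _ _ (fun e => hne e.symm) (prefix_of_begins hj hi h)

section fac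
variable {A : Mat N} {ω : Fin M → List (Fin N)}

noncomputable def facHead (hex : ∀ x : ↥(SSpace A), ∃ i, Begins x.1 (ω i))
    (x : ↥(SSpace A)) : Fin M := (hex x).choose

lemma facHead_begins (hex : ∀ x : ↥(SSpace A), ∃ i, Begins x.1 (ω i)) (x : ↥(SSpace A)) :
    Begins x.1 (ω (facHead hex x)) := (hex x).choose_spec

noncomputable def facStep (hex : ∀ x : ↥(SSpace A), ∃ i, Begins x.1 (ω i))
    (x : ↥(SSpace A)) : ↥(SSpace A) :=
  ⟨shiftn x.1 (ω (facHead hex x)).length, shiftn_mem x.2 _⟩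

noncomputable def fac (hex : ∀ x : ↥(SSpace A), ∃ i, Begins x.1 (ω i))
    (x : ↥(SSpace A)) (n : ℕ) : Fin M := facHead hex ((facStep hex)^[n] x)

lemma fac_zero (hex : ∀ x : ↥(SSpace A), ∃ i, Begins x.1 (ω i)) (x : ↥(SSpace A)) :
    fac hex x 0 = facHead hex x := rfl

lemma fac_succ (hex : ∀ x : ↥(SSpace A), ∃ i, Begins x.1 (ω i)) (x : ↥(SSpace A)) (n : ℕ) :
    fac hex x (n + 1) = fac hex (facStep hex x) n := by
  rw [fac, fac, Function.iterate_succ_apply]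

lemma fac_shift_eq (hex : ∀ x : ↥(SSpace A), ∃ i, Begins x.1 (ω i)) (x : ↥(SSpace A)) :
    fac hex (facStep hex x) = fun k => fac hex x (k + 1) :=
  funext fun k => (fac_succ hex x k).symm

lemma fac_factors (hne : ∀ i, ω i ≠ []) (hex : ∀ x : ↥(SSpace A), ∃ i, Begins x.1 (ω i)) :
    ∀ (x : ↥(SSpace A)), Factors ω x.1 (fac hex x) := by
  have key : ∀ n (x : ↥(SSpace A)),
      Begins (fun k => x.1 (pos ω (fac hex x) n + k)) (ω (fac hex x n)) := by
    intro n
    induction n with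
    | zero =>
      intro x i hi
      show x.1 (pos ω (fac hex x) 0 + i) = _
      rw [pos_zero, Nat.zero_add]
      exact facHead_begins hex x i hi
    | succ n ih =>
      intro x
      have IH := ih (facStep hex x)
      rw [fac_shift_eq hex x] at IH
      intro i hi
      have h2 := IH i hi
      simp only at h2
      show x.1 (pos ω (fac hex x) (n + 1) + i) = _
      rw [← h2]
      show x.1 (pos ω (fac hex x) (n + 1) + i)
          = x.1 (pos ω (fun k => fac hex x (k + 1)) n + i + (ω (fac hex x 0)).length)
      apply congrArg
      have hp := pos_shift ω (fac hex x) n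
      omega
  intro x n
  exact key n x

lemma fac_matC (hne : ∀ i, ω i ≠ []) (hex : ∀ x : ↥(SSpace A), ∃ i, Begins x.1 (ω i))
    (x : ↥(SSpace A)) (n : ℕ) : matC A ω (fac hex x n) (fac hex x (n + 1)) = true :=
  factors_matC x.2 (fac_factors hne hex x) n

end fac

open Classical in
noncomputable def conc (d : Fin N) (ω : Fin M → List (Fin N)) (f : ℕ → Fin M) (n : ℕ) : Fin N :=
  if h : ∃ m, n < pos ω f (m + 1) then
    (ω (f (Nat.find h))).getD (n - pos ω f (Nat.find h)) d
  else d

lemma pos_le_of_find {ω : Fin M → List (Fin N)} {f : ℕ → Fin M} {n : ℕ}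
    (h : ∃ m, n < pos ω f (m + 1)) : pos ω f (Nat.find h) ≤ n := by
  cases hm : Nat.find h with
  | zero => rw [pos_zero]; omega
  | succ m' =>
    have := Nat.find_min h (m := m') (by omega)
    omega

lemma conc_block {ω : Fin M → List (Fin N)} (hne : ∀ i, ω i ≠ []) (d : Fin N)
    (f : ℕ → Fin M) (m k : ℕ) (hk : k < (ω (f m)).length) :
    conc d ω f (pos ω f m + k) = (ω (f m)).get ⟨k, hk⟩ := by
  classical
  have hex : ∃ m', pos ω f m + k < pos ω f (m' + 1) := ⟨m, by rw [pos_succ]; omega⟩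
  simp only [conc]
  rw [dif_pos hex]
  have hfind : Nat.find hex = m := by
    rw [Nat.find_eq_iff]
    refine ⟨by rw [pos_succ]; omega, fun m' hm' => ?_⟩
    push_neg
    calc pos ω f (m' + 1) ≤ pos ω f m := pos_mono ω f (by omega)
    _ ≤ pos ω f m + k := by omega
  rw [hfind]
  have e : pos ω f m + k - pos ω f m = k := by omega
  rw [e, List.getD_eq_getElem _ _ hk]
  simp [List.get_eq_getElem]

lemma conc_factors {ω : Fin M → List (Fin N)} (hne : ∀ i, ω i ≠ []) (d : Fin N)
    (f : ℕ → Fin M) : Factors ω (conc d ω f) f := by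
  intro n i hi
  show conc d ω f (pos ω f n + i) = _
  exact conc_block hne d f n i hi

lemma conc_eq_of_factors {ω : Fin M → List (Fin N)} (hne : ∀ i, ω i ≠ []) (d : Fin N)
    {x : ℕ → Fin N} {f : ℕ → Fin M} (h : Factors ω x f) : conc d ω f = x := by
  funext n
  have hex : ∃ m, n < pos ω f (m + 1) := ⟨n, by have := le_pos hne f (n + 1); omega⟩
  set m := Nat.find hex with hm
  have h1 : n < pos ω f (m + 1) := Nat.find_spec hex
  have h2 : pos ω f m ≤ n := pos_le_of_find hex
  have hk : n - pos ω f m < (ω (f m)).length := by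
    rw [pos_succ] at h1; omega
  have e : pos ω f m + (n - pos ω f m) = n := by omega
  have := conc_block hne d f m (n - pos ω f m) hk
  rw [e] at this
  rw [this]
  have h3 := h m (n - pos ω f m) hk
  simp only at h3
  rw [e] at h3
  exact h3.symm

lemma conc_mem {A : Mat N} {ω : Fin M → List (Fin N)} (hne : ∀ i, ω i ≠ []) (d : Fin N)
    {f : ℕ → Fin M} (hf : ∀ n, matC A ω (f n) (f (n + 1)) = true) : conc d ω f ∈ SSpace A := by
  intro j
  have hex : ∃ m, j < pos ω f (m + 1) := ⟨j, by have := le_pos hne f (j + 1); omega⟩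
  set m := Nat.find hex with hm
  have h1 : j < pos ω f (m + 1) := Nat.find_spec hex
  have h2 : pos ω f m ≤ j := pos_le_of_find hex
  have hb := factors_two_block (conc_factors hne d f) m
  have hadm : Adm A (ω (f m) ++ ω (f (m + 1))) := of_decide_eq_true (hf m)
  refine trans_of_begins hb hadm h2 ?_
  rw [List.length_append]
  have h3 : pos ω f (m + 1) = pos ω f m + (ω (f m)).length := pos_succ ω f m
  have h4 : 0 < (ω (f (m + 1))).length := List.length_pos_iff.mpr (hne (f (m + 1)))
  omega

/-- a map on a subshift depending on a finite window is continuous -/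
lemma continuous_of_window {m : ℕ} {β : Type*} [TopologicalSpace β]
    {S : Set (ℕ → Fin m)} (Φ : ↥S → β) (K : ℕ)
    (h : ∀ x y : ↥S, (∀ k, k < K → x.1 k = y.1 k) → Φ x = Φ y) : Continuous Φ := by
  rcases isEmpty_or_nonempty ↥S with hS | hS
  · rw [continuous_iff_continuousAt]
    intro x
    exact (hS.false x).elim
  · classical
    inhabit ↥S
    set Ψ : (Fin K → Fin m) → β := fun v =>
      if hv : ∃ x : ↥S, ∀ k (hk : k < K), x.1 k = v ⟨k, hk⟩ then Φ hv.choose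
      else Φ default with hΨ
    have hfac : Φ = Ψ ∘ (fun x : ↥S => (fun k : Fin K => x.1 k)) := by
      funext x
      have hv : ∃ y : ↥S, ∀ k (hk : k < K), y.1 k = (fun k : Fin K => x.1 k) ⟨k, hk⟩ :=
        ⟨x, fun k hk => rfl⟩
      show Φ x = Ψ (fun k : Fin K => x.1 k)
      rw [hΨ]
      simp only [dif_pos hv]
      exact h x hv.choose (fun k hk => (hv.choose_spec k hk).symm)
    rw [hfac]
    exact continuous_of_discreteTopology.comp
      (continuous_pi fun k => (continuous_apply (k : ℕ)).comp continuous_subtype_val)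

/-- conc depends only on an initial window -/
lemma conc_agree {ω : Fin M → List (Fin N)} (hne : ∀ i, ω i ≠ []) (d : Fin N)
    {f g : ℕ → Fin M} (n : ℕ) (h : ∀ k, k < n + 1 → f k = g k) :
    conc d ω f n = conc d ω g n := by
  classical
  have hexf : ∃ m, n < pos ω f (m + 1) := ⟨n, by have := le_pos hne f (n + 1); omega⟩
  have hexg : ∃ m, n < pos ω g (m + 1) := ⟨n, by have := le_pos hne g (n + 1); omega⟩
  have hfle : Nat.find hexf ≤ n := by
    by_contra hc
    have := Nat.find_min hexf (m := n) (by omega)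
    have := le_pos hne f (n + 1)
    omega
  have hfind : Nat.find hexg = Nat.find hexf := by
    rw [Nat.find_eq_iff]
    constructor
    · rw [← pos_congr (ω := ω) (f := f) (g := g) (fun k hk => h k (by omega))]
      exact Nat.find_spec hexf
    · intro m' hm'
      rw [← pos_congr (ω := ω) (f := f) (g := g) (fun k hk => h k (by omega))]
      exact Nat.find_min hexf hm'
  simp only [conc]
  rw [dif_pos hexf, dif_pos hexg, hfind]
  rw [← pos_congr (ω := ω) (f := f) (g := g) (fun k hk => h k (by omega))]
  rw [← h (Nat.find hexf) (by omega)]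

/-- fac depends only on an initial window -/
lemma fac_agree {A : Mat N} {ω : Fin M → List (Fin N)}
    (hex : ∀ x : ↥(SSpace A), ∃ i, Begins x.1 (ω i)) (hpc : IsPrefixCode ω) :
    ∀ (n : ℕ) (x y : ↥(SSpace A)), (∀ k, k < (n + 1) * (Lmax ω + 1) → x.1 k = y.1 k) →
    fac hex x n = fac hex y n := by
  have head_agree : ∀ (x y : ↥(SSpace A)), (∀ k, k < Lmax ω + 1 → x.1 k = y.1 k) →
      facHead hex x = facHead hex y := by
    intro x y hxy
    have h1 := facHead_begins hex x
    have h2 : Begins y.1 (ω (facHead hex x)) := by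
      intro i hi
      rw [← hxy i (by have := length_le_Lmax ω (facHead hex x); omega)]
      exact h1 i hi
    exact code_prefix_unique hpc h2 (facHead_begins hex y)
  intro n
  induction n with
  | zero =>
    intro x y hxy
    exact head_agree x y (fun k hk => hxy k (by omega))
  | succ n ih =>
    intro x y hxy
    have hh : facHead hex x = facHead hex y :=
      head_agree x y (fun k hk => hxy k (by nlinarith))
    rw [fac_succ, fac_succ]
    apply ih
    intro k hk
    show x.1 (k + (ω (facHead hex x)).length) = y.1 (k + (ω (facHead hex y)).length)
    rw [← hh]
    apply hxy
    have := length_le_Lmax ω (facHead hex x)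
    nlinarith

/-- underlying sequence of an iterated shift -/
lemma shiftS_iterate {A : Mat N} (y : ↥(SSpace A)) (k : ℕ) :
    ((shiftS A)^[k] y).1 = fun n => y.1 (n + k) := by
  induction k with
  | zero => funext n; simp
  | succ k ih =>
    rw [Function.iterate_succ_apply']
    funext n
    show ((shiftS A)^[k] y).1 (n + 1) = y.1 (n + (k + 1))
    rw [ih]
    show y.1 (n + 1 + k) = y.1 (n + (k + 1))
    exact congrArg y.1 (by omega)

/-- For a right Markov code `C` for `(X_A, σ_A)`, the Markov shifts
`(X_{A(C)}, σ_{A(C)})` and `(X_A, σ_A)` are continuously orbit equivalent. -/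
theorem matC_continuously_orbit_equivalent {N M : ℕ} (A : Mat N)
    (hA : IrreducibleMat A) (hnp : ¬ IsPermMat A)
    (ω : Fin M → List (Fin N)) (hC : IsRightMarkovCode A ω) :
    COE (matC A ω) A := by
  classical
  have hN : 0 < N := by
    rcases Nat.eq_zero_or_pos N with h | h
    · exfalso
      apply hnp
      subst h
      exact ⟨fun i => i.elim0, fun j => j.elim0⟩
    · exact h
  set d : Fin N := ⟨0, hN⟩ with hd
  have hne := hC.ne
  have hpc := hC.prefixCode
  have hex : ∀ x : ↥(SSpace A), ∃ i, Begins x.1 (ω i) :=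
    fun x => exists_code_prefix hC.uniqueFact x.2
  -- the maps
  set F : ↥(SSpace (matC A ω)) → ↥(SSpace A) :=
    fun f => ⟨conc d ω f.1, conc_mem hne d f.2⟩ with hF
  set G : ↥(SSpace A) → ↥(SSpace (matC A ω)) :=
    fun x => ⟨fac hex x, fac_matC hne hex x⟩ with hG
  have hGF : ∀ f, G (F f) = f := by
    intro f
    apply Subtype.ext
    exact factors_unique hpc (fac_factors hne hex (F f)) (conc_factors hne d f.1)
  have hFG : ∀ x, F (G x) = x := by
    intro x
    apply Subtype.ext
    exact conc_eq_of_factors hne d (fac_factors hne hex x)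
  have hFc : Continuous F := by
    apply Continuous.subtype_mk
    apply continuous_pi
    intro n
    exact continuous_of_window (fun f : ↥(SSpace (matC A ω)) => conc d ω f.1 n) (n + 1)
      (fun f g hfg => conc_agree hne d n hfg)
  have hGc : Continuous G := by
    apply Continuous.subtype_mk
    apply continuous_pi
    intro n
    exact continuous_of_window (fun x : ↥(SSpace A) => fac hex x n) ((n + 1) * (Lmax ω + 1))
      (fun x y hxy => fac_agree hex hpc n x y hxy)
  let E : ↥(SSpace (matC A ω)) ≃ ↥(SSpace A) := ⟨F, G, hGF, hFG⟩
  let H : ↥(SSpace (matC A ω)) ≃ₜ ↥(SSpace A) := ⟨E, hFc, hGc⟩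
  have hH : ∀ f, H f = F f := fun _ => rfl
  have hHs : ∀ y, H.symm y = G y := fun _ => rfl
  obtain ⟨L, hL, hSI⟩ := hC.shiftInv
  set Φ : List (Fin M) → ℕ := fun l =>
    if hcond : l.length = L ∧ AdmX A ((l.map ω).flatten) then
      (hSI l hcond.1 hcond.2).choose.length
    else 0 with hΦ
  refine ⟨H, ⟨fun _ => 0, fun f => (ω (f.1 0)).length, continuous_const, ?_, ?_⟩,
    ⟨fun y => Φ ((List.range L).map (fac hex y)), fun _ => L, ?_, continuous_const, ?_⟩⟩
  · -- continuity of l₁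
    exact continuous_of_window _ 1 (fun x y hxy => by rw [hxy 0 (by omega)])
  · -- first orbit condition
    intro f
    apply Subtype.ext
    rw [Function.iterate_zero_apply, shiftS_iterate, hH, hH]
    show conc d ω (fun k => f.1 (k + 1)) = fun n => conc d ω f.1 (n + (ω (f.1 0)).length)
    exact conc_eq_of_factors hne d (factors_shift (conc_factors hne d f.1))
  · -- continuity of k₂
    apply continuous_of_window _ ((L + 1) * (Lmax ω + 1))
    intro x y hxy
    show Φ _ = Φ _
    have e : (List.range L).map (fac hex x) = (List.range L).map (fac hex y) := by
      apply List.map_congr_left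
      intro a ha
      rw [List.mem_range] at ha
      apply fac_agree hex hpc
      intro k hk
      apply hxy
      have h1 : (a + 1) * (Lmax ω + 1) ≤ (L + 1) * (Lmax ω + 1) :=
        Nat.mul_le_mul_right _ (by omega)
      omega
    rw [e]
  · -- second orbit condition
    intro y
    set f : ℕ → Fin M := fac hex y with hf
    set l : List (Fin M) := (List.range L).map f with hlval
    have hlen : l.length = L := by simp [hlval]
    have hflat0 : Begins y.1 ((l.map ω).flatten) := by
      have := factors_begins_flatten (fac_factors hne hex y) L
      simpa [hlval] using this
    have hAdmX : AdmX A ((l.map ω).flatten) := ⟨y.1, y.2, hflat0⟩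
    set l' : List (Fin M) := (hSI l hlen hAdmX).choose with hl'def
    have hl' : ((l.map ω).flatten).tail = (l'.map ω).flatten := (hSI l hlen hAdmX).choose_spec
    have hk2 : Φ l = l'.length := by
      simp only [hΦ]
      rw [dif_pos ⟨hlen, hAdmX⟩]
    -- f agrees with l on its range
    have hgl : ∀ i (h : i < l.length), f i = l.get ⟨i, h⟩ := by
      intro i h
      simp [hlval, List.get_eq_getElem]
    -- the candidate factorization of the shifted point
    set g : ℕ → Fin M := fun n =>
      if h : n < l'.length then l'.get ⟨n, h⟩ else f (L + (n - l'.length)) with hgdef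
    have hg' : ∀ i (h : i < l'.length), g i = l'.get ⟨i, h⟩ := by
      intro i h
      simp only [hgdef]
      rw [dif_pos h]
    -- shifted point begins with flatten of l'
    have hbt : Begins (shift y.1) ((l'.map ω).flatten) := by
      intro i hi
      have hlen2 : ((l'.map ω).flatten).length = ((l.map ω).flatten).length - 1 := by
        rw [← hl', List.length_tail]
      have hi' : i < ((l'.map ω).flatten).length := hi
      have hi2 : i + 1 < ((l.map ω).flatten).length := by omega
      have e1 := hflat0 (i + 1) hi2
      simp only [List.get_eq_getElem] at e1 ⊢
      show y.1 (i + 1) = ((l'.map ω).flatten)[i]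
      rw [List.getElem_of_eq hl'.symm hi', List.getElem_tail]
      exact e1
    -- position bridge
    have hposL : pos ω f L = ((l.map ω).flatten).length := by
      have := pos_eq_flatten_length (ω := ω) l hgl
      rw [hlen] at this
      exact this
    have hposl' : pos ω g l'.length = ((l'.map ω).flatten).length :=
      pos_eq_flatten_length (ω := ω) l' hg'
    have hlenl' : ((l'.map ω).flatten).length = ((l.map ω).flatten).length - 1 := by
      rw [← hl', List.length_tail]
    have hLpos : 1 ≤ pos ω f L := by
      have := le_pos hne f L
      omega
    have hpos : ∀ m, pos ω g (l'.length + m) + 1 = pos ω f (L + m) := by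
      intro m
      induction m with
      | zero => simp only [Nat.add_zero]; omega
      | succ m ih =>
        have hgm : g (l'.length + m) = f (L + m) := by
          simp only [hgdef]
          rw [dif_neg (by omega)]
          congr 1
          omega
        have e1 : l'.length + (m + 1) = (l'.length + m) + 1 := by omega
        rw [e1, pos_succ, hgm]
        have e2 : L + (m + 1) = (L + m) + 1 := by omega
        rw [e2, pos_succ]
        omega
    -- the shifted point factors along g
    have hgfac : Factors ω (shift y.1) g := by
      intro n
      rcases lt_or_ge n l'.length with hn | hn
      · exact begins_flatten_block l' hbt hg' n hn
      · obtain ⟨m, rfl⟩ : ∃ m, n = l'.length + m := ⟨n - l'.length, by omega⟩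
        have hgm : g (l'.length + m) = f (L + m) := by
          simp only [hgdef]
          rw [dif_neg (by omega)]
          congr 1
          omega
        intro i hi
        have hi2 : i < (ω (f (L + m))).length := by rw [← hgm]; exact hi
        have hfe : y.1 (pos ω f (L + m) + i) = (ω (f (L + m))).get ⟨i, hi2⟩ :=
          fac_factors hne hex y (L + m) i hi2
        simp only [List.get_eq_getElem] at hfe ⊢
        show y.1 (pos ω g (l'.length + m) + i + 1) = (ω (g (l'.length + m)))[i]
        have e : pos ω g (l'.length + m) + i + 1 = pos ω f (L + m) + i := by
          have := hpos m
          omega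
        rw [e, hfe]
        exact List.getElem_of_eq (congrArg ω hgm.symm) hi2
    -- identify the factorizations
    have h1 : Factors ω (shift y.1) (fac hex (shiftS A y)) := fac_factors hne hex (shiftS A y)
    have hfac_eq : fac hex (shiftS A y) = g := factors_unique hpc h1 hgfac
    apply Subtype.ext
    rw [shiftS_iterate, shiftS_iterate]
    funext n
    show fac hex (shiftS A y) (n + Φ l) = fac hex y (n + L)
    rw [hfac_eq, hk2]
    show (if h : n + l'.length < l'.length then l'.get ⟨n + l'.length, h⟩
      else f (L + (n + l'.length - l'.length))) = f (n + L)
    rw [dif_neg (by omega)]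
    exact congrArg f (by omega)

end TMS
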